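/- Let H be a contextuality scenario and p : V(H) → [0,1] a probabilistic model. Then p admits a Q₁ certificate (a positive semidefinite matrix M indexed by V ∪ {1} with M_{11} = 1, M_{1v} = M_{vv} = p(v), M_{uv} = 0 for distinct u,v in a common edge, and ∑_{u∈e} M_{uv} = p(v) for all edges e and vertices v) if and only if p admits a macroscopic non-contextuality certificate: a positive semidefinite matrix γ indexed by V satisfying ∑_{u∈e} γ_{uv} = 0 for all edges e and vertices v; γ_{uv} = −p(u)p(v) for distinct u,v in a common edge; and γ_{vv} = p(v) − p(v)². -/

import Mathlib

/-- Q₁ certificate for a probabilistic model `p` on the scenario `(V, E)`: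
a psd matrix over `{1} ∪ V` (the special index `1` being `none`) with `M₁₁ = 1`,
`M₁ᵥ = Mᵥᵥ = p(v)`, vanishing entries for distinct events in a common edge,
and edge row-sums equal to `p(v)`. -/
def Q1Cert {V : Type*} [Fintype V] [DecidableEq V] (E : Finset (Finset V))
    (p : V → ℝ) (M : Matrix (Option V) (Option V) ℝ) : Prop :=
  M.PosSemidef ∧
  M none none = 1 ∧
  (∀ v : V, M none (some v) = p v) ∧
  (∀ v : V, M (some v) (some v) = p v) ∧
  (∀ e ∈ E, ∀ u ∈ e, ∀ v ∈ e, u ≠ v → M (some u) (some v) = 0) ∧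
  (∀ e ∈ E, ∀ v : V, ∑ u ∈ e, M (some u) (some v) = p v)

/-- Macroscopic non-contextuality certificate for `p`: a psd matrix over `V` whose
edge row-sums vanish, with `γᵤᵥ = -p(u)p(v)` for distinct `u,v` in a common edge,
and diagonal `p(v) - p(v)²`. -/
def MNCCert {V : Type*} [Fintype V] [DecidableEq V] (E : Finset (Finset V))
    (p : V → ℝ) (γ : Matrix V V ℝ) : Prop :=
  γ.PosSemidef ∧
  (∀ e ∈ E, ∀ v : V, ∑ u ∈ e, γ u v = 0) ∧
  (∀ e ∈ E, ∀ u ∈ e, ∀ v ∈ e, u ≠ v → γ u v = -(p u * p v)) ∧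
  (∀ v : V, γ v v = p v - (p v) ^ 2)

/-- A probabilistic model admits a Q₁ certificate iff it admits a macroscopic
non-contextuality certificate. -/
theorem q1_iff_mnc {V : Type*} [Fintype V] [DecidableEq V]
    (E : Finset (Finset V)) (p : V → ℝ)
    (hp : ∀ v, 0 ≤ p v ∧ p v ≤ 1)
    (hnorm : ∀ e ∈ E, ∑ v ∈ e, p v = 1) :
    (∃ M : Matrix (Option V) (Option V) ℝ, Q1Cert E p M) ↔
      (∃ γ : Matrix V V ℝ, MNCCert E p γ) := by
  constructor
  · rintro ⟨M, hpsd, h11, h1v, hvv, hoff, hrow⟩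
    refine ⟨fun u v => M (some u) (some v) - p u * p v, ?_, ?_, ?_, ?_⟩
    · refine Matrix.PosSemidef.of_dotProduct_mulVec_nonneg ?_ ?_
      · refine Matrix.IsHermitian.ext fun u v => ?_
        have h := congrFun (congrFun hpsd.1 u) v
        simp only [Matrix.conjTranspose_apply, star, id] at h
        simp [Matrix.conjTranspose_apply, ← h]
        ring
      · intro x
        have h := hpsd.dotProduct_mulVec_nonneg (fun o => o.elim (-(∑ v, p v * x v)) x)
        simp only [dotProduct, Matrix.mulVec, Fintype.sum_option,
          Option.elim, star_trivial, Pi.star_apply] at h ⊢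
        have hsym : ∀ u, M (some u) none = p u := by
          intro u
          have h := congrFun (congrFun hpsd.1 (some u)) none
          simp only [Matrix.conjTranspose_apply, star, id] at h
          rw [← h, h1v]
        simp only [h11, h1v, hsym] at h
        have key : ∀ u, x u * ∑ v, (M (some u) (some v) - p u * p v) * x v
            = x u * ∑ v, M (some u) (some v) * x v
              - (p u * x u) * ∑ v, p v * x v := by
          intro u
          rw [Finset.mul_sum, Finset.mul_sum, Finset.mul_sum, ← Finset.sum_sub_distrib]
          congr 1; ext v; ring
        have h2 : ∀ u : V, x u * (p u * -(∑ v, p v * x v) + ∑ v, M (some u) (some v) * x v)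
            = x u * ∑ v, M (some u) (some v) * x v
              - (∑ v, p v * x v) * (p u * x u) := by
          intro u; ring
        rw [Finset.sum_congr rfl (fun u _ => h2 u), Finset.sum_sub_distrib,
          ← Finset.mul_sum] at h
        rw [Finset.sum_congr rfl (fun u _ => key u), Finset.sum_sub_distrib,
          ← Finset.sum_mul]
        nlinarith [h]
    · intro e he v
      dsimp only
      have := hrow e he v
      rw [Finset.sum_sub_distrib, this, ← Finset.sum_mul, hnorm e he]
      ring
    · intro e he u hu v hv huv
      dsimp only
      rw [hoff e he u hu v hv huv]; ring
    · intro v; dsimp only; rw [hvv v]; ring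
  · rintro ⟨γ, hpsd, hrow, hoff, hdiag⟩
    refine ⟨fun i j => (i.elim 1 p) * (j.elim 1 p) +
        (Option.elim i 0 (fun u => Option.elim j 0 (fun v => γ u v))), ?_, ?_, ?_, ?_, ?_, ?_⟩
    · refine Matrix.PosSemidef.of_dotProduct_mulVec_nonneg ?_ ?_
      · refine Matrix.IsHermitian.ext fun i j => ?_
        simp only [Matrix.conjTranspose_apply, star_trivial]
        cases i <;> cases j <;> simp only [Option.elim] <;> try ring
        rename_i u v
        have h2 := congrFun (congrFun hpsd.1 u) v
        simp only [Matrix.conjTranspose_apply, star_trivial] at h2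
        linarith [h2]
      · intro y
        have h := hpsd.dotProduct_mulVec_nonneg (fun v => y (some v))
        simp only [dotProduct, Matrix.mulVec, Fintype.sum_option,
          Option.elim, star_trivial, Pi.star_apply, mul_one, one_mul, add_zero] at h ⊢
        have base : ∀ u : V, y (some u) * ∑ v, (p u * p v + γ u v) * y (some v)
            = (p u * y (some u)) * ∑ v, p v * y (some v)
              + y (some u) * ∑ v, γ u v * y (some v) := by
          intro u
          rw [Finset.mul_sum, Finset.mul_sum, Finset.mul_sum, ← Finset.sum_add_distrib]
          exact Finset.sum_congr rfl fun v _ => by ring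
        have key : ∀ u : V, y (some u) * (p u * y none + ∑ v, (p u * p v + γ u v) * y (some v))
            = y none * (p u * y (some u))
              + (p u * y (some u)) * (∑ v, p v * y (some v))
              + y (some u) * ∑ v, γ u v * y (some v) := by
          intro u; rw [mul_add, base u]; ring
        rw [Finset.sum_congr rfl (fun u _ => key u), Finset.sum_add_distrib,
          Finset.sum_add_distrib, ← Finset.mul_sum, ← Finset.sum_mul]
        nlinarith [h, sq_nonneg (y none + ∑ v, p v * y (some v))]
    · simp [Option.elim]
    · intro v; simp [Option.elim]
    · intro v; simp [Option.elim, hdiag v]; ring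
    · intro e he u hu v hv huv
      simp [Option.elim, hoff e he u hu v hv huv]
    · intro e he v
      simp only [Option.elim]
      rw [Finset.sum_add_distrib, hrow e he v, ← Finset.sum_mul, hnorm e he]
      ring
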